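/- arXiv:1001.3251 — 4 statements merged into one kernel-verified Lean document; each statement's English description precedes it below -/
import Mathlib

section
/- Let R be a trapezoid representation of a trapezoid graph G, let u be a vertex of G, and let V_i be a master component of u such that every trapezoid of a vertex of V_i lies completely to the left of T_u in R. Then for every component V_j ∈ D*_u(V_i), every trapezoid of a vertex of V_j lies completely to the right of T_u in R. -/
open SimpleGraph Set

/-- In a trapezoid representation `R` of `G`, if `V_i` is a master component of `u`
whose trapezoids all lie completely to the left of `T_u`, then all trapezoids of
every component `V_j ∈ D*_u(V_i)` lie completely to the right of `T_u`. -/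
theorem master_component_left_right {V : Type*} [Fintype V] [DecidableEq V]
    (G : SimpleGraph V)
    (a b c d : V → ℝ) (hab : ∀ v, a v ≤ b v) (hcd : ∀ v, c v ≤ d v)
    (Lt : V → V → Prop) (hLt : ∀ v w, Lt v w ↔ (b v < a w ∧ d v < c w))
    (hAdj : ∀ v w, G.Adj v w ↔ (v ≠ w ∧ ¬ Lt v w ∧ ¬ Lt w v))
    (u : V)
    (S : Set V) (hS : S = {v | v ∉ G.neighborSet u ∧ v ≠ u})
    (supp : (SimpleGraph.induce S G).ConnectedComponent → Set V)
    (hsupp : ∀ C, supp C =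
      {v | ∃ h : v ∈ S, (SimpleGraph.induce S G).connectedComponentMk ⟨v, h⟩ = C})
    (Nbr : Set V → Set V)
    (hNbr : ∀ A, Nbr A = {w | w ∉ A ∧ ∃ v ∈ A, G.Adj v w})
    (Dom : (SimpleGraph.induce S G).ConnectedComponent →
      Set ((SimpleGraph.induce S G).ConnectedComponent))
    (hDom : ∀ C, Dom C = {C' | Nbr (supp C') ⊆ Nbr (supp C)})
    (Ci : (SimpleGraph.induce S G).ConnectedComponent)
    (hmaster : ∀ C', (Dom C').ncard ≤ (Dom Ci).ncard)
    (hleft : ∀ v ∈ supp Ci, Lt v u) :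
    ∀ Cj ∈ ((Set.univ : Set ((SimpleGraph.induce S G).ConnectedComponent)) \ Dom Ci),
      ∀ v ∈ supp Cj, Lt u v := by
  intro Cj hCj v hv
  have hCjnot : Cj ∉ Dom Ci := hCj.2
  -- basic membership facts
  have hSfact : ∀ x ∈ S, ¬ G.Adj u x ∧ x ≠ u := by
    intro x hx; rw [hS] at hx; exact ⟨hx.1, hx.2⟩
  have hsuppS : ∀ C, ∀ x ∈ supp C, x ∈ S := by
    intro C x hx; rw [hsupp] at hx; exact hx.1
  have hsuppMk : ∀ C, ∀ x, ∀ hx : x ∈ S,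
      (SimpleGraph.induce S G).connectedComponentMk ⟨x, hx⟩ = C → x ∈ supp C := by
    intro C x hx h; rw [hsupp]; exact ⟨hx, h⟩
  have hsuppMk' : ∀ C, ∀ x ∈ supp C, ∀ hx : x ∈ S,
      (SimpleGraph.induce S G).connectedComponentMk ⟨x, hx⟩ = C := by
    intro C x hx hxS
    rw [hsupp] at hx; obtain ⟨h1, h2⟩ := hx; exact h2
  -- every vertex of S is strictly on one side of u
  have hside : ∀ x ∈ S, Lt x u ∨ Lt u x := by
    intro x hx
    obtain ⟨hna, hne⟩ := hSfact x hx
    by_contra h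
    push_neg at h
    exact hna ((hAdj u x).2 ⟨Ne.symm hne, h.2, h.1⟩)
  -- transitivity through u
  have htrans : ∀ x y, Lt x u → Lt u y → Lt x y := by
    intro x y hx hy
    rw [hLt] at hx hy ⊢
    exact ⟨lt_of_lt_of_le hx.1 (le_trans (hab u) (le_of_lt hy.1)),
           lt_of_lt_of_le hx.2 (le_trans (hcd u) (le_of_lt hy.2))⟩
  -- adjacency within S gives same component
  have hcomp : ∀ x y, ∀ hx : x ∈ S, ∀ hy : y ∈ S, G.Adj x y →
      (SimpleGraph.induce S G).connectedComponentMk ⟨x, hx⟩ =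
      (SimpleGraph.induce S G).connectedComponentMk ⟨y, hy⟩ := by
    intro x y hx hy hadj
    apply SimpleGraph.ConnectedComponent.sound
    exact SimpleGraph.Adj.reachable (by exact hadj)
  -- leftness propagates along walks in the induced graph
  have hwalk : ∀ (x y : S), (SimpleGraph.induce S G).Reachable x y →
      Lt (x : V) u → Lt (y : V) u := by
    intro x y hreach
    obtain ⟨p⟩ := hreach
    induction p with
    | nil => exact fun h => h
    | cons hadj p ih =>
      rename_i x' z' y'
      intro hx
      apply ih
      have hz'S : (z' : V) ∈ S := z'.2
      rcases hside (z' : V) hz'S with h | h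
      · exact h
      · exfalso
        have hGadj : G.Adj (x' : V) (z' : V) := hadj
        have := ((hAdj (x' : V) (z' : V)).1 hGadj).2.1
        exact this (htrans _ _ hx h)
  -- whole component on the left if one vertex is
  have hpropagate : ∀ C, (∃ x ∈ supp C, Lt x u) → ∀ y ∈ supp C, Lt y u := by
    intro C ⟨x, hx, hxl⟩ y hy
    have hxS := hsuppS C x hx
    have hyS := hsuppS C y hy
    have hxC := hsuppMk' C x hx hxS
    have hyC := hsuppMk' C y hy hyS
    have hreach : (SimpleGraph.induce S G).Reachable ⟨x, hxS⟩ ⟨y, hyS⟩ :=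
      SimpleGraph.ConnectedComponent.exact (hxC.trans hyC.symm)
    exact hwalk _ _ hreach hxl
  -- any external neighbor of a component is adjacent to u
  have hNbrAdj : ∀ C, ∀ w ∈ Nbr (supp C), G.Adj u w := by
    intro C w hw
    rw [hNbr] at hw
    obtain ⟨hwn, z, hz, hzw⟩ := hw
    have hzS := hsuppS C z hz
    have hne : w ≠ u := by
      rintro rfl
      exact (hSfact z hzS).1 hzw.symm
    by_contra hna
    have hwS : w ∈ S := by rw [hS]; exact ⟨hna, hne⟩
    exact hwn (hsuppMk C w hwS
      ((hcomp w z hwS hzS hzw.symm).trans (hsuppMk' C z hz hzS)))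
  -- if C is left of u and w is adjacent to u but not in Nbr (supp C),
  -- then every vertex of C is completely to the left of w
  have hfar : ∀ C, (∀ x ∈ supp C, Lt x u) → ∀ w, G.Adj u w → w ∉ Nbr (supp C) →
      ∀ z ∈ supp C, Lt z w := by
    intro C hCl w hadj hwn z hz
    have hzS := hsuppS C z hz
    have hwnS : w ∉ S := by
      intro hwS
      exact (hSfact w hwS).1 hadj
    have hwz : ¬ G.Adj z w := by
      intro h
      apply hwn
      rw [hNbr]
      exact ⟨fun hws => hwnS (hsuppS C w hws), z, hz, h⟩
    have hne : z ≠ w := by rintro rfl; exact hwnS hzS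
    have hcases : Lt z w ∨ Lt w z := by
      by_contra h
      push_neg at h
      exact hwz ((hAdj z w).2 ⟨hne, h.1, h.2⟩)
    rcases hcases with h | h
    · exact h
    · exfalso
      -- Lt w z and Lt z u give Lt w u, contradicting Adj u w
      have hzu := hCl z hz
      have hwu : Lt w u := by
        rw [hLt] at h hzu ⊢
        exact ⟨lt_of_lt_of_le h.1 (le_trans (hab z) (le_of_lt hzu.1)),
               lt_of_lt_of_le h.2 (le_trans (hcd z) (le_of_lt hzu.2))⟩
      exact ((hAdj u w).1 hadj).2.2 hwu
  -- distinct components: vertices are non-adjacent and distinct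
  have hdistinct : Ci ≠ Cj := by
    intro h
    apply hCjnot
    rw [hDom, ← h]
    exact fun x hx => hx
  -- main argument: suppose v is to the left of u
  have hvS := hsuppS Cj v hv
  rcases hside v hvS with hvl | hvr
  swap
  · exact hvr
  exfalso
  -- then all of Cj is to the left of u
  have hCjl : ∀ x ∈ supp Cj, Lt x u := hpropagate Cj ⟨v, hv, hvl⟩
  -- witness w1 ∈ Nbr (supp Cj) \ Nbr (supp Ci)
  have hw1 : ∃ w, w ∈ Nbr (supp Cj) ∧ w ∉ Nbr (supp Ci) := by
    by_contra h
    push_neg at h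
    apply hCjnot
    rw [hDom]
    exact fun x hx => h x hx
  obtain ⟨w1, hw1j, hw1i⟩ := hw1
  -- witness w2 ∈ Nbr (supp Ci) \ Nbr (supp Cj), by maximality of Dom Ci
  have hw2 : ∃ w, w ∈ Nbr (supp Ci) ∧ w ∉ Nbr (supp Cj) := by
    by_contra h
    push_neg at h
    have hsub : Nbr (supp Ci) ⊆ Nbr (supp Cj) := fun x hx => h x hx
    have hssub : Dom Ci ⊂ Dom Cj := by
      constructor
      · intro C' hC'
        rw [hDom] at hC' ⊢
        exact fun x hx => hsub (hC' hx)
      · intro hcon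
        apply hCjnot
        apply hcon
        rw [hDom]
        exact fun x hx => hx
    have hfin : (Dom Cj).Finite := Set.toFinite _
    exact absurd (hmaster Cj) (not_le.2 (Set.ncard_lt_ncard hssub hfin))
  obtain ⟨w2, hw2i, hw2j⟩ := hw2
  -- both w1 and w2 are adjacent to u
  have hw1u : G.Adj u w1 := hNbrAdj Cj w1 hw1j
  have hw2u : G.Adj u w2 := hNbrAdj Ci w2 hw2i
  -- all of Ci is left of w1, all of Cj is left of w2
  have hCiw1 : ∀ z ∈ supp Ci, Lt z w1 := hfar Ci hleft w1 hw1u hw1i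
  have hCjw2 : ∀ z ∈ supp Cj, Lt z w2 := hfar Cj hCjl w2 hw2u hw2j
  -- w1 intersects some vertex vj0 ∈ supp Cj
  obtain ⟨hw1nj, vj0, hvj0, hvj0w1⟩ := by rw [hNbr] at hw1j; exact hw1j
  obtain ⟨hw2ni, vi0, hvi0, hvi0w2⟩ := by rw [hNbr] at hw2i; exact hw2i
  -- from adjacency: ¬ Lt vj0 w1 and ¬ Lt vi0 w2
  have hA1 : a w1 ≤ b vj0 ∨ c w1 ≤ d vj0 := by
    have := ((hAdj vj0 w1).1 hvj0w1).2.1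
    rw [hLt] at this
    push_neg at this
    rcases lt_or_ge (b vj0) (a w1) with h | h
    · exact Or.inr (this h)
    · exact Or.inl h
  have hA2 : a w2 ≤ b vi0 ∨ c w2 ≤ d vi0 := by
    have := ((hAdj vi0 w2).1 hvi0w2).2.1
    rw [hLt] at this
    push_neg at this
    rcases lt_or_ge (b vi0) (a w2) with h | h
    · exact Or.inr (this h)
    · exact Or.inl h
  -- vi0 and vj0 belong to distinct components, hence non-adjacent and distinct
  have hvi0S := hsuppS Ci vi0 hvi0
  have hvj0S := hsuppS Cj vj0 hvj0
  have hne0 : vi0 ≠ vj0 := by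
    rintro rfl
    exact hdistinct ((hsuppMk' Ci vi0 hvi0 hvi0S).symm.trans
      (hsuppMk' Cj vi0 hvj0 hvi0S))
  have hnadj0 : ¬ G.Adj vi0 vj0 := by
    intro h
    exact hdistinct ((hsuppMk' Ci vi0 hvi0 hvi0S).symm.trans
      ((hcomp vi0 vj0 hvi0S hvj0S h).trans (hsuppMk' Cj vj0 hvj0 hvj0S)))
  have hcomp0 : Lt vi0 vj0 ∨ Lt vj0 vi0 := by
    by_contra h
    push_neg at h
    exact hnadj0 ((hAdj vi0 vj0).2 ⟨hne0, h.1, h.2⟩)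
  -- extract the strict inequalities
  have hH1 : ∀ z ∈ supp Ci, b z < a w1 ∧ d z < c w1 := by
    intro z hz; have := hCiw1 z hz; rw [hLt] at this; exact this
  have hH2 : ∀ z ∈ supp Cj, b z < a w2 ∧ d z < c w2 := by
    intro z hz; have := hCjw2 z hz; rw [hLt] at this; exact this
  have hbj0 := hH2 vj0 hvj0  -- b vj0 < a w2, d vj0 < c w2
  have hbi0 := hH1 vi0 hvi0  -- b vi0 < a w1, d vi0 < c w1
  simp only [hLt] at hcomp0
  rcases hA2 with h2 | h2 <;> rcases hA1 with h1 | h1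
  · -- a w2 ≤ b vi0, a w1 ≤ b vj0 : b-interval orders contradict
    have : b vj0 < b vi0 := lt_of_lt_of_le hbj0.1 h2
    have : b vi0 < b vj0 := lt_of_lt_of_le hbi0.1 h1
    linarith
  · -- a w2 ≤ b vi0, c w1 ≤ d vj0
    have hb : b vj0 < b vi0 := lt_of_lt_of_le hbj0.1 h2
    have hd : d vi0 < d vj0 := lt_of_lt_of_le hbi0.2 h1
    rcases hcomp0 with h | h
    · have := hab vj0
      linarith [h.1]
    · have : d vj0 < d vi0 := lt_of_lt_of_le h.2 (hcd vi0)
      linarith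
  · -- c w2 ≤ d vi0, a w1 ≤ b vj0
    have hd : d vj0 < d vi0 := lt_of_lt_of_le hbj0.2 h2
    have hb : b vi0 < b vj0 := lt_of_lt_of_le hbi0.1 h1
    rcases hcomp0 with h | h
    · have : d vi0 < d vj0 := lt_of_lt_of_le h.2 (hcd vj0)
      linarith
    · have : b vj0 < b vi0 := lt_of_lt_of_le h.1 (hab vi0)
      linarith
  · -- c w2 ≤ d vi0, c w1 ≤ d vj0
    have : d vi0 < d vj0 := lt_of_lt_of_le hbi0.2 h1
    have : d vj0 < d vi0 := lt_of_lt_of_le hbj0.2 h2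
    linarith
end

section
/- Every parallelogram graph is an acyclic trapezoid graph: if G has a parallelogram representation R (a trapezoid representation in which every trapezoid is a parallelogram), then R is an acyclic trapezoid representation of G. -/
open SimpleGraph Set

/-- Every parallelogram representation is an acyclic trapezoid representation:
the directed graph `F_R`, obtained by orienting crossings of left/right lines of
the trapezoids from the line with smaller angle with `L_2` to the one with larger
angle and merging the two lines of each trapezoid, has no directed cycle. -/
theorem parallelogram_is_acyclic_trapezoid {V : Type*} [Fintype V]
    (G : SimpleGraph V)
    (a b c d : V → ℝ) (hab : ∀ v, a v ≤ b v) (hcd : ∀ v, c v ≤ d v)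
    (hAdj : ∀ v w, G.Adj v w ↔
      (v ≠ w ∧ ¬ (b v < a w ∧ d v < c w) ∧ ¬ (b w < a v ∧ d w < c v)))
    (hpar : ∀ v, a v - c v = b v - d v)
    (cross : ℝ × ℝ → ℝ × ℝ → Prop)
    (hcross : ∀ p q, cross p q ↔
      ((p.1 < q.1 ∧ q.2 < p.2) ∨ (q.1 < p.1 ∧ p.2 < q.2)))
    (Arc : V → V → Prop)
    (hArc : ∀ v w, Arc v w ↔ (v ≠ w ∧
      ∃ p ∈ ({(a v, c v), (b v, d v)} : Set (ℝ × ℝ)),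
      ∃ q ∈ ({(a w, c w), (b w, d w)} : Set (ℝ × ℝ)),
        cross p q ∧ q.1 - q.2 < p.1 - p.2)) :
    ∀ v, ¬ Relation.TransGen Arc v v := by
  have key : ∀ v w, Arc v w → a w - c w < a v - c v := by
    intro v w h
    obtain ⟨-, p, hp, q, hq, -, hlt⟩ := (hArc v w).1 h
    have hv : p.1 - p.2 = a v - c v := by
      rcases hp with h | h <;> subst h <;> simp [hpar v]
    have hw : q.1 - q.2 = a w - c w := by
      rcases hq with h | h <;> subst h <;> simp [hpar w]
    rw [hv, hw] at hlt; exact hlt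
  have key' : ∀ v w, Relation.TransGen Arc v w → a w - c w < a v - c v := by
    intro v w h
    induction h with
    | single h => exact key _ _ h
    | tail _ h ih => exact (key _ _ h).trans ih
  exact fun v h => lt_irrefl _ (key' v v h)
end

section
/- Every permutation graph is a bounded tolerance graph: if G is the intersection graph of segments between two parallel lines, then G admits a tolerance representation ⟨I,t⟩ with t_i = |I_i| for every vertex. -/
open SimpleGraph Set MeasureTheory

section Aux

variable {V : Type*} [Fintype V]

/-- Lexicographic strict order on three keys. -/
private def lex3 (f g : V → ℝ) (r : V → ℕ) (u v : V) : Prop :=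
  f u < f v ∨ (f u = f v ∧ (g u < g v ∨ (g u = g v ∧ r u < r v)))

private lemma lex3_trans (f g : V → ℝ) (r : V → ℕ) :
    ∀ a b c : V, lex3 f g r a b → lex3 f g r b c → lex3 f g r a c := by
  intro a b c h1 h2
  unfold lex3 at *
  rcases h1 with h1 | ⟨e1, h1 | ⟨e1', h1⟩⟩ <;>
    rcases h2 with h2 | ⟨e2, h2 | ⟨e2', h2⟩⟩ <;>
    first
      | (left; linarith)
      | (right; constructor; linarith;
         first
           | (left; linarith)
           | (right; constructor; linarith; omega))

private lemma lex3_irrefl (f g : V → ℝ) (r : V → ℕ) :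
    ∀ a : V, ¬ lex3 f g r a a := by
  intro a h
  unfold lex3 at h
  rcases h with h | ⟨_, h | ⟨_, h⟩⟩ <;> simp at h

private lemma lex3_total (f g : V → ℝ) (r : V → ℕ)
    (hr : ∀ u v : V, u ≠ v → r u ≠ r v) :
    ∀ a b : V, lex3 f g r a b ∨ a = b ∨ lex3 f g r b a := by
  intro a b
  by_cases hab : a = b
  · exact Or.inr (Or.inl hab)
  rcases lt_trichotomy (f a) (f b) with h | h | h
  · exact Or.inl (Or.inl h)
  · rcases lt_trichotomy (g a) (g b) with h' | h' | h'
    · exact Or.inl (Or.inr ⟨h, Or.inl h'⟩)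
    · rcases lt_trichotomy (r a) (r b) with h'' | h'' | h''
      · exact Or.inl (Or.inr ⟨h, Or.inr ⟨h', h''⟩⟩)
      · exact absurd h'' (hr a b hab)
      · exact Or.inr (Or.inr (Or.inr ⟨h.symm, Or.inr ⟨h'.symm, h''⟩⟩))
    · exact Or.inr (Or.inr (Or.inr ⟨h.symm, Or.inl h'⟩))
  · exact Or.inr (Or.inr (Or.inl h))

private lemma rank_lt_rank (lt : V → V → Prop) [DecidableRel lt]
    (htr : ∀ a b c : V, lt a b → lt b c → lt a c)
    (hirr : ∀ a : V, ¬ lt a a) {u v : V} (h : lt u v) :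
    (Finset.univ.filter fun w => lt w u).card <
      (Finset.univ.filter fun w => lt w v).card := by
  apply Finset.card_lt_card
  rw [Finset.ssubset_iff_of_subset]
  · exact ⟨u, by simp [h], by simp [hirr u]⟩
  · intro w hw
    simp only [Finset.mem_filter, Finset.mem_univ, true_and] at hw ⊢
    exact htr _ _ _ hw h

private lemma rank_le_iff (lt : V → V → Prop) [DecidableRel lt]
    (htr : ∀ a b c : V, lt a b → lt b c → lt a c)
    (hirr : ∀ a : V, ¬ lt a a)
    (htot : ∀ a b : V, lt a b ∨ a = b ∨ lt b a) (u v : V) :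
    ((Finset.univ.filter fun w => lt w u).card ≤
      (Finset.univ.filter fun w => lt w v).card) ↔ (lt u v ∨ u = v) := by
  constructor
  · intro h
    rcases htot u v with h1 | h1 | h1
    · exact Or.inl h1
    · exact Or.inr h1
    · exact absurd h (not_le.2 (rank_lt_rank lt htr hirr h1))
  · rintro (h | rfl)
    · exact (rank_lt_rank lt htr hirr h).le
    · exact le_rfl

private lemma tol_iff {au bu av bv : ℝ} :
    min (bu - au) (bv - av) ≤ min bu bv - max au av ↔
      ((av ≤ au ∧ bu ≤ bv) ∨ (au ≤ av ∧ bv ≤ bu)) := by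
  have l1 := min_le_left bu bv
  have l2 := min_le_right bu bv
  have l3 := le_max_left au av
  have l4 := le_max_right au av
  constructor
  · intro h
    rcases le_total (bu - au) (bv - av) with hc | hc
    · rw [min_eq_left hc] at h
      left; constructor <;> linarith
    · rw [min_eq_right hc] at h
      right; constructor <;> linarith
  · rintro (⟨h5, h6⟩ | ⟨h5, h6⟩)
    · rw [max_eq_left h5, min_eq_left h6]
      exact min_le_left _ _
    · rw [max_eq_right h5, min_eq_right h6]
      exact min_le_right _ _

end Aux

/-- Every permutation graph is a bounded tolerance graph: if `G` is the
intersection graph of line segments between two parallel lines (segment of `v`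
having top endpoint `(p v).1` and bottom endpoint `(p v).2`), then `G` admits a
tolerance representation `⟨I, t⟩` with `t v = |I v|` for every vertex. -/
theorem permutation_is_bounded_tolerance {V : Type*} [Fintype V]
    (G : SimpleGraph V) (p : V → ℝ × ℝ)
    (hAdj : ∀ u v, G.Adj u v ↔ (u ≠ v ∧
      (((p u).1 < (p v).1 ∧ (p v).2 < (p u).2) ∨
       ((p v).1 < (p u).1 ∧ (p u).2 < (p v).2)))) :
    ∃ (a b t : V → ℝ),
      (∀ v, a v ≤ b v) ∧ (∀ v, 0 < t v) ∧ (∀ v, t v = b v - a v) ∧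
      ∀ u v, u ≠ v → (G.Adj u v ↔
        min (t u) (t v) ≤
          (volume (Set.Icc (a u) (b u) ∩ Set.Icc (a v) (b v))).toReal) := by
  classical
  set n := Fintype.card V with hn
  set x : V → ℝ := fun v => (p v).1 with hx
  set y : V → ℝ := fun v => (p v).2 with hy
  set r : V → ℕ := fun v => (Fintype.equivFin V v : ℕ) with hrdef
  have hr : ∀ u v : V, u ≠ v → r u ≠ r v := by
    intro u v huv h
    exact huv ((Fintype.equivFin V).injective (Fin.val_injective h))
  set fA : V → ℕ := fun v => (Finset.univ.filter fun w => lex3 x y r w v).card with hfA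
  set fB : V → ℕ := fun v => (Finset.univ.filter fun w => lex3 y x r w v).card with hfB
  set a : V → ℝ := fun v => -(fA v : ℝ) with ha
  set b : V → ℝ := fun v => (n + 1 : ℝ) - (fB v : ℝ) with hb
  have hfAn : ∀ v, (fA v : ℝ) ≤ n := by
    intro v
    exact_mod_cast (Finset.card_filter_le _ _).trans_eq (Finset.card_univ)
  have hfBn : ∀ v, (fB v : ℝ) ≤ n := by
    intro v
    exact_mod_cast (Finset.card_filter_le _ _).trans_eq (Finset.card_univ)
  have hab : ∀ v, a v ≤ b v := by
    intro v
    have h1 := hfBn v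
    have h2 : (0:ℝ) ≤ (fA v : ℝ) := Nat.cast_nonneg _
    simp only [ha, hb]
    linarith
  have htpos : ∀ v, 0 < b v - a v := by
    intro v
    have h1 := hfBn v
    have h2 : (0:ℝ) ≤ (fA v : ℝ) := Nat.cast_nonneg _
    simp only [ha, hb]
    linarith
  refine ⟨a, b, fun v => b v - a v, hab, htpos, fun v => rfl, ?_⟩
  intro u v huv
  -- compute the volume
  have hvol : (volume (Set.Icc (a u) (b u) ∩ Set.Icc (a v) (b v))).toReal
      = max (min (b u) (b v) - max (a u) (a v)) 0 := by
    rw [Set.Icc_inter_Icc, Real.volume_Icc, ENNReal.toReal_ofReal']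
  rw [hvol]
  have hmin : 0 < min (b u - a u) (b v - a v) := lt_min (htpos u) (htpos v)
  have hstep1 : (min (b u - a u) (b v - a v) ≤ max (min (b u) (b v) - max (a u) (a v)) 0)
      ↔ min (b u - a u) (b v - a v) ≤ min (b u) (b v) - max (a u) (a v) := by
    rw [le_max_iff]
    constructor
    · rintro (h | h)
      · exact h
      · linarith
    · exact Or.inl
  rw [hstep1, tol_iff]
  -- translate interval comparisons into rank comparisons
  have hAle : ∀ w z : V, (a z ≤ a w ↔ (lex3 x y r w z ∨ w = z)) := by
    intro w z
    rw [← rank_le_iff (lex3 x y r) (lex3_trans x y r) (lex3_irrefl x y r)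
      (lex3_total x y r hr) w z]
    simp only [ha, hfA, neg_le_neg_iff, Nat.cast_le]
  have hBle : ∀ w z : V, (b w ≤ b z ↔ (lex3 y x r z w ∨ z = w)) := by
    intro w z
    rw [← rank_le_iff (lex3 y x r) (lex3_trans y x r) (lex3_irrefl y x r)
      (lex3_total y x r hr) z w]
    simp only [hb, hfB, sub_le_sub_iff_left, Nat.cast_le]
  rw [hAdj]
  constructor
  · rintro ⟨-, h | h⟩
    · left
      refine ⟨(hAle u v).2 (Or.inl (Or.inl h.1)), (hBle u v).2 (Or.inl (Or.inl h.2))⟩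
    · right
      refine ⟨(hAle v u).2 (Or.inl (Or.inl h.1)), (hBle v u).2 (Or.inl (Or.inl h.2))⟩
  · rintro (⟨h1, h2⟩ | ⟨h1, h2⟩)
    · refine ⟨huv, ?_⟩
      have hA := ((hAle u v).1 h1).resolve_right (fun e => huv e)
      have hB := ((hBle u v).1 h2).resolve_right (fun e => huv e.symm)
      left
      rcases hA with hA | ⟨eA, hA⟩
      · constructor
        · exact hA
        · rcases hB with hB | ⟨eB, hB⟩
          · exact hB
          · exfalso
            rcases hB with hB | ⟨eB', _⟩ <;> simp only [hx, hy] at * <;> linarith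
      · exfalso
        rcases hA with hA | ⟨eA', hrA⟩ <;>
          rcases hB with hB | ⟨eB, hB | ⟨eB', hrB⟩⟩ <;>
            simp only [hx, hy] at * <;> first | linarith | omega
    · refine ⟨huv, ?_⟩
      have hA := ((hAle v u).1 h1).resolve_right (fun e => huv e.symm)
      have hB := ((hBle v u).1 h2).resolve_right (fun e => huv e)
      right
      rcases hA with hA | ⟨eA, hA⟩
      · constructor
        · exact hA
        · rcases hB with hB | ⟨eB, hB⟩
          · exact hB
          · exfalso
            rcases hB with hB | ⟨eB', _⟩ <;> simp only [hx, hy] at * <;> linarith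
      · exfalso
        rcases hA with hA | ⟨eA', hrA⟩ <;>
          rcases hB with hB | ⟨eB, hB | ⟨eB', hrB⟩⟩ <;>
            simp only [hx, hy] at * <;> first | linarith | omega
end

section
/- Let G be a trapezoid graph with trapezoid representation R, and u a vertex with D*_u nonempty in the sense that some component of G \ N[u] has trapezoid completely to the right of T_u while another lies completely to the left. Then replacing T_u by its two boundary lines l(T_u) and r(T_u) and deleting the interior does not change adjacency of u to vertices of N_1(u,R) ∪ N_2(u,R) ∪ N_12(u,R): every vertex of N_1(u,R) has its trapezoid intersecting l(T_u), every vertex of N_2(u,R) has its trapezoid intersecting r(T_u), and every vertex of N_12(u,R) intersects both lines — provided R is standard with respect to u. -/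
open SimpleGraph Set

private lemma line_meet (f0 f1 g0 g1 : ℝ) (hf : 0 ≤ f0 ∨ 0 ≤ f1) (hg : 0 ≤ g0 ∨ 0 ≤ g1)
    (h0 : 0 ≤ f0 + g0) (h1 : 0 ≤ f1 + g1) :
    ∃ y : ℝ, 0 ≤ y ∧ y ≤ 1 ∧ 0 ≤ f0 + y * (f1 - f0) ∧ 0 ≤ g0 + y * (g1 - g0) := by
  rcases hf with hf0 | hf1
  · rcases hg with hg0 | hg1
    · exact ⟨0, le_refl _, zero_le_one, by linarith, by linarith⟩
    · rcases le_or_gt 0 g0 with hg0 | hg0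
      · exact ⟨0, le_refl _, zero_le_one, by linarith, by linarith⟩
      rcases le_or_gt 0 f1 with hf1 | hf1
      · exact ⟨1, zero_le_one, le_refl _, by linarith, by linarith⟩
      have hD : 0 < f0 - f1 := by linarith
      refine ⟨f0 / (f0 - f1), by positivity, by rw [div_le_one hD]; linarith, ?_, ?_⟩
      · have h : f0 + f0 / (f0 - f1) * (f1 - f0) = 0 := by field_simp; ring
        linarith
      · have h : g0 + f0 / (f0 - f1) * (g1 - g0) =
            (g0 * (f0 - f1) + f0 * (g1 - g0)) / (f0 - f1) := by field_simp
        rw [h, le_div_iff₀ hD]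
        nlinarith
  · rcases hg with hg0 | hg1
    · rcases le_or_gt 0 f0 with hf0 | hf0
      · exact ⟨0, le_refl _, zero_le_one, by linarith, by linarith⟩
      rcases le_or_gt 0 g1 with hg1 | hg1
      · exact ⟨1, zero_le_one, le_refl _, by linarith, by linarith⟩
      have hD : 0 < g0 - g1 := by linarith
      refine ⟨g0 / (g0 - g1), by positivity, by rw [div_le_one hD]; linarith, ?_, ?_⟩
      · have h : f0 + g0 / (g0 - g1) * (f1 - f0) =
            (f0 * (g0 - g1) + g0 * (f1 - f0)) / (g0 - g1) := by field_simp
        rw [h, le_div_iff₀ hD]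
        nlinarith
      · have h : g0 + g0 / (g0 - g1) * (g1 - g0) = 0 := by field_simp; ring
        linarith
    · exact ⟨1, zero_le_one, le_refl _, by linarith, by linarith⟩

/-- In a trapezoid representation `R` that is standard with respect to `u`, and in
which some non-neighbor lies completely to the left and some completely to the
right of `T_u`, replacing `T_u` by its two boundary lines preserves adjacency of
`u` to `N_1(u,R) ∪ N_2(u,R) ∪ N_12(u,R)`: every trapezoid of `N_1(u,R)` meets the
left line `l(T_u)`, every trapezoid of `N_2(u,R)` meets the right line `r(T_u)`,
and every trapezoid of `N_12(u,R)` meets both. -/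
theorem standard_representation_line_split {V : Type*} [Fintype V]
    (G : SimpleGraph V)
    (a b c d : V → ℝ) (hab : ∀ v, a v ≤ b v) (hcd : ∀ v, c v ≤ d v)
    (Lt : V → V → Prop) (hLt : ∀ v w, Lt v w ↔ (b v < a w ∧ d v < c w))
    (hAdj : ∀ v w, G.Adj v w ↔ (v ≠ w ∧ ¬ Lt v w ∧ ¬ Lt w v))
    (u : V)
    (D1 D2 : Set V) (hD1 : D1 = {v | Lt v u}) (hD2 : D2 = {v | Lt u v})
    (hDstar : D1.Nonempty ∧ D2.Nonempty)
    (N0 N1 N2 N12 : Set V)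
    (hN0 : N0 = {v ∈ G.neighborSet u |
      ¬ (∃ w ∈ D1, G.Adj v w) ∧ ¬ (∃ w ∈ D2, G.Adj v w)})
    (hN1 : N1 = {v ∈ G.neighborSet u |
      (∃ w ∈ D1, G.Adj v w) ∧ ¬ (∃ w ∈ D2, G.Adj v w)})
    (hN2 : N2 = {v ∈ G.neighborSet u |
      ¬ (∃ w ∈ D1, G.Adj v w) ∧ (∃ w ∈ D2, G.Adj v w)})
    (hN12 : N12 = {v ∈ G.neighborSet u |
      (∃ w ∈ D1, G.Adj v w) ∧ (∃ w ∈ D2, G.Adj v w)})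
    -- R is standard with respect to u:
    (hstd1 : ∀ w ∈ N0 ∪ N2, a u < a w ∧ c u < c w)
    (hstd2 : ∀ w ∈ N0 ∪ N1, b w < b u ∧ d w < d u) :
    -- every trapezoid of N1 meets the left line l(T_u):
    (∀ w ∈ N1, ∃ y : ℝ, 0 ≤ y ∧ y ≤ 1 ∧
      c w + y * (a w - c w) ≤ c u + y * (a u - c u) ∧
      c u + y * (a u - c u) ≤ d w + y * (b w - d w)) ∧
    -- every trapezoid of N2 meets the right line r(T_u):
    (∀ w ∈ N2, ∃ y : ℝ, 0 ≤ y ∧ y ≤ 1 ∧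
      c w + y * (a w - c w) ≤ d u + y * (b u - d u) ∧
      d u + y * (b u - d u) ≤ d w + y * (b w - d w)) ∧
    -- every trapezoid of N12 meets both lines:
    (∀ w ∈ N12,
      (∃ y : ℝ, 0 ≤ y ∧ y ≤ 1 ∧
        c w + y * (a w - c w) ≤ c u + y * (a u - c u) ∧
        c u + y * (a u - c u) ≤ d w + y * (b w - d w)) ∧
      (∃ y : ℝ, 0 ≤ y ∧ y ≤ 1 ∧
        c w + y * (a w - c w) ≤ d u + y * (b u - d u) ∧
        d u + y * (b u - d u) ≤ d w + y * (b w - d w))) := by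
  -- A vertex adjacent to u and to some member of D1 meets the left line.
  have left_key : ∀ w : V, G.Adj u w → (∃ x ∈ D1, G.Adj w x) →
      ∃ y : ℝ, 0 ≤ y ∧ y ≤ 1 ∧
        c w + y * (a w - c w) ≤ c u + y * (a u - c u) ∧
        c u + y * (a u - c u) ≤ d w + y * (b w - d w) := by
    intro w hadj ⟨x, hxD, hwx⟩
    rw [hD1] at hxD
    simp only [Set.mem_setOf_eq, hLt] at hxD
    -- ¬ Lt x w from adjacency of w and x
    have hnxw : ¬ Lt x w := ((hAdj w x).mp hwx).2.2
    rw [hLt] at hnxw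
    -- ¬ Lt w u from adjacency of u and w
    have hnwu : ¬ Lt w u := ((hAdj u w).mp hadj).2.2
    rw [hLt] at hnwu
    have hf : 0 ≤ (c u - c w) ∨ 0 ≤ (a u - a w) := by
      rcases not_and_or.mp hnxw with h | h
      · exact Or.inr (by push_neg at h; linarith [hxD.1])
      · exact Or.inl (by push_neg at h; linarith [hxD.2])
    have hg : 0 ≤ (d w - c u) ∨ 0 ≤ (b w - a u) := by
      rcases not_and_or.mp hnwu with h | h
      · exact Or.inr (by push_neg at h; linarith)
      · exact Or.inl (by push_neg at h; linarith)
    obtain ⟨y, hy0, hy1, h1, h2⟩ := line_meet (c u - c w) (a u - a w) (d w - c u)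
      (b w - a u) hf hg (by linarith [hcd w]) (by linarith [hab w])
    exact ⟨y, hy0, hy1, by nlinarith, by nlinarith⟩
  -- A vertex adjacent to u and to some member of D2 meets the right line.
  have right_key : ∀ w : V, G.Adj u w → (∃ x ∈ D2, G.Adj w x) →
      ∃ y : ℝ, 0 ≤ y ∧ y ≤ 1 ∧
        c w + y * (a w - c w) ≤ d u + y * (b u - d u) ∧
        d u + y * (b u - d u) ≤ d w + y * (b w - d w) := by
    intro w hadj ⟨x, hxD, hwx⟩
    rw [hD2] at hxD
    simp only [Set.mem_setOf_eq, hLt] at hxD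
    have hnwx : ¬ Lt w x := ((hAdj w x).mp hwx).2.1
    rw [hLt] at hnwx
    have hnuw : ¬ Lt u w := ((hAdj u w).mp hadj).2.1
    rw [hLt] at hnuw
    have hf : 0 ≤ (d u - c w) ∨ 0 ≤ (b u - a w) := by
      rcases not_and_or.mp hnuw with h | h
      · exact Or.inr (by push_neg at h; linarith)
      · exact Or.inl (by push_neg at h; linarith)
    have hg : 0 ≤ (d w - d u) ∨ 0 ≤ (b w - b u) := by
      rcases not_and_or.mp hnwx with h | h
      · exact Or.inr (by push_neg at h; linarith [hxD.1])
      · exact Or.inl (by push_neg at h; linarith [hxD.2])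
    obtain ⟨y, hy0, hy1, h1, h2⟩ := line_meet (d u - c w) (b u - a w) (d w - d u)
      (b w - b u) hf hg (by linarith [hcd w]) (by linarith [hab w])
    exact ⟨y, hy0, hy1, by nlinarith, by nlinarith⟩
  refine ⟨?_, ?_, ?_⟩
  · intro w hw
    rw [hN1] at hw
    obtain ⟨hwu, h1, -⟩ := hw
    exact left_key w hwu h1
  · intro w hw
    rw [hN2] at hw
    obtain ⟨hwu, -, h2⟩ := hw
    exact right_key w hwu h2
  · intro w hw
    rw [hN12] at hw
    obtain ⟨hwu, h1, h2⟩ := hw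
    exact ⟨left_key w hwu h1, right_key w hwu h2⟩
end
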